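/- Let n ≥ 4 and let R_{ij} be a bilinear form on an n-dimensional space with nondegenerate metric g. Define ρ and P as the projective and conformal Schouten tensors of R. If 2Σ^{km}_{l[i} ρ_{j]m} = 2S^{km}_{l[i} P_{j]m} for all i,j,k,l, then R_{ij} = (r/n) g_{ij} where r = g^{ij}R_{ij}; i.e. the Ricci tensor is pure trace (Einstein condition). -/

import Mathlib

theorem weyl_coincidence_implies_einstein (n : ℕ) (hn : 4 ≤ n)
    (g ginv : Fin n → Fin n → ℝ)
    (hgsym : ∀ i j, g i j = g j i)
    (hginvsym : ∀ i j, ginv i j = ginv j i)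
    (hinv : ∀ i j, ∑ k, ginv i k * g k j = if i = j then (1:ℝ) else 0)
    (R ρ P : Fin n → Fin n → ℝ) (r : ℝ)
    (hr : r = ∑ i, ∑ j, ginv i j * R i j)
    (hρ : ∀ i j, ρ i j = (1/((n:ℝ) - 1)) * ((R i j + R j i)/2)
        + (1/((n:ℝ) + 1)) * ((R i j - R j i)/2))
    (hP : ∀ i j, P i j = (1/((n:ℝ) - 2)) * ((R i j + R j i)/2)
        + (1/(n:ℝ)) * ((R i j - R j i)/2)
        - (r/(2*((n:ℝ) - 2)*((n:ℝ) - 1))) * g i j)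
    (heq : ∀ i j k l, ∑ m,
        (((if l = k then (1:ℝ) else 0) * (if i = m then (1:ℝ) else 0)
            + (if l = m then (1:ℝ) else 0) * (if i = k then (1:ℝ) else 0)) * ρ j m
          - ((if l = k then (1:ℝ) else 0) * (if j = m then (1:ℝ) else 0)
            + (if l = m then (1:ℝ) else 0) * (if j = k then (1:ℝ) else 0)) * ρ i m)
      = ∑ m,
        (((if l = k then (1:ℝ) else 0) * (if i = m then (1:ℝ) else 0)
            + (if l = m then (1:ℝ) else 0) * (if i = k then (1:ℝ) else 0)
            - g l i * ginv k m) * P j m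
          - ((if l = k then (1:ℝ) else 0) * (if j = m then (1:ℝ) else 0)
            + (if l = m then (1:ℝ) else 0) * (if j = k then (1:ℝ) else 0)
            - g l j * ginv k m) * P i m)) :
    ∀ i j, R i j = (r/(n:ℝ)) * g i j := by
  classical
  have hn4 : (4:ℝ) ≤ (n:ℝ) := by exact_mod_cast hn
  have hn0 : (n:ℝ) ≠ 0 := by linarith
  have hn1 : (n:ℝ) - 1 ≠ 0 := by linarith
  have hn2 : (n:ℝ) - 2 ≠ 0 := by linarith
  have hnp1 : (n:ℝ) + 1 ≠ 0 := by linarith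
  set Q : Fin n → Fin n → ℝ := fun j k => ∑ m, ginv k m * P j m with hQdef
  -- simplified hypothesis
  have E : ∀ i j k l,
      (if l = k then (1:ℝ) else 0) * ρ j i + (if i = k then (1:ℝ) else 0) * ρ j l
        - ((if l = k then (1:ℝ) else 0) * ρ i j + (if j = k then (1:ℝ) else 0) * ρ i l)
      = (if l = k then (1:ℝ) else 0) * P j i + (if i = k then (1:ℝ) else 0) * P j l
          - g l i * Q j k
        - ((if l = k then (1:ℝ) else 0) * P i j + (if j = k then (1:ℝ) else 0) * P i l
          - g l j * Q i k) := by
    intro i j k l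
    have h := heq i j k l
    have e1 : ∀ (y z : Fin n) (c : ℝ),
        ∑ m, (((if l = k then (1:ℝ) else 0) * (if y = m then (1:ℝ) else 0)
            + (if l = m then (1:ℝ) else 0) * (if y = k then (1:ℝ) else 0)
            - c * ginv k m) * P z m)
        = (if l = k then (1:ℝ) else 0) * P z y + (if y = k then (1:ℝ) else 0) * P z l
          - c * Q z k := by
      intro y z c
      rw [hQdef]
      by_cases hyk : y = k <;> by_cases hlk : l = k <;>
        simp [hyk, hlk, add_mul, sub_mul, ite_mul, mul_ite, Finset.sum_sub_distrib,
          Finset.sum_add_distrib, Finset.sum_ite_eq, Finset.mul_sum, mul_assoc]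
    have e2 : ∀ (y z : Fin n) (T : Fin n → Fin n → ℝ),
        ∑ m, (((if l = k then (1:ℝ) else 0) * (if y = m then (1:ℝ) else 0)
            + (if l = m then (1:ℝ) else 0) * (if y = k then (1:ℝ) else 0)) * T z m)
        = (if l = k then (1:ℝ) else 0) * T z y + (if y = k then (1:ℝ) else 0) * T z l := by
      intro y z T
      by_cases hyk : y = k <;> by_cases hlk : l = k <;>
        simp [hyk, hlk, add_mul, ite_mul, mul_ite, Finset.sum_add_distrib,
          Finset.sum_ite_eq, mul_assoc]
    rw [Finset.sum_sub_distrib, Finset.sum_sub_distrib, e1, e1, e2, e2] at h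
    exact h
  -- g is injective as a matrix
  have hinj : ∀ v : Fin n → ℝ, (∀ l, ∑ m, g l m * v m = 0) → ∀ m0, v m0 = 0 := by
    intro v hv m0
    have : v m0 = ∑ m, (if m0 = m then (1:ℝ) else 0) * v m := by
      simp [ite_mul, Finset.sum_ite_eq]
    rw [this]
    calc ∑ m, (if m0 = m then (1:ℝ) else 0) * v m
        = ∑ m, (∑ l, ginv m0 l * g l m) * v m := by
          refine Finset.sum_congr rfl fun m _ => ?_
          rw [hinv m0 m]
      _ = ∑ m, ∑ l, ginv m0 l * (g l m * v m) := by
          refine Finset.sum_congr rfl fun m _ => ?_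
          rw [Finset.sum_mul]
          exact Finset.sum_congr rfl fun l _ => by ring
      _ = ∑ l, ginv m0 l * ∑ m, g l m * v m := by
          rw [Finset.sum_comm]
          exact Finset.sum_congr rfl fun l _ => (Finset.mul_sum _ _ _).symm
      _ = 0 := by simp [hv]
  -- a fresh index
  have fresh : ∀ s : Finset (Fin n), s.card < n → ∃ x, x ∉ s := by
    intro s hs
    by_contra hc
    push_neg at hc
    have : (Finset.univ : Finset (Fin n)) ⊆ s := fun x _ => hc x
    have := Finset.card_le_card this
    simp [Finset.card_univ] at this
    omega
  -- the off-diagonal components of Q vanish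
  have hQ0 : ∀ k j, j ≠ k → Q j k = 0 := by
    intro k j hjk
    obtain ⟨i0, hi0⟩ := fresh {j, k} (by
      have := Finset.card_insert_le j ({k} : Finset (Fin n))
      simp at this ⊢
      omega)
    obtain ⟨i1, hi1⟩ := fresh {j, k, i0} (by
      have h1 := Finset.card_insert_le j ({k, i0} : Finset (Fin n))
      have h2 := Finset.card_insert_le k ({i0} : Finset (Fin n))
      simp at h1 h2 ⊢
      omega)
    simp only [Finset.mem_insert, Finset.mem_singleton, not_or] at hi0 hi1
    obtain ⟨hi0j, hi0k⟩ := hi0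
    obtain ⟨hi1j, hi1k, hi1i0⟩ := hi1
    -- basic relation from E with all indices off k
    have ha : ∀ i l, i ≠ k → l ≠ k → g l i * Q j k = g l j * Q i k := by
      intro i l hik hlk
      have h := E i j k l
      simp only [if_neg hik, if_neg hlk, if_neg hjk, zero_mul] at h
      linarith
    set c0 : ℝ := g k i0 * Q j k - g k j * Q i0 k with hc0
    set c1 : ℝ := g k i1 * Q j k - g k j * Q i1 k with hc1
    set w : Fin n → ℝ := fun m =>
      c1 * (Q j k * (if m = i0 then 1 else 0) - Q i0 k * (if m = j then 1 else 0))
      - c0 * (Q j k * (if m = i1 then 1 else 0) - Q i1 k * (if m = j then 1 else 0)) with hw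
    have hgw : ∀ l, ∑ m, g l m * w m = 0 := by
      intro l
      have hev : ∑ m, g l m * w m =
          c1 * (Q j k * g l i0 - Q i0 k * g l j)
          - c0 * (Q j k * g l i1 - Q i1 k * g l j) := by
        rw [hw]
        simp [mul_sub, mul_ite, mul_one, mul_zero, Finset.sum_sub_distrib,
          Finset.sum_ite_eq', Finset.mul_sum]
        ring
      rw [hev]
      by_cases hlk : l = k
      · rw [hlk, hc0, hc1]; ring
      · linear_combination c1 * (ha i0 l hi0k hlk) - c0 * (ha i1 l hi1k hlk)
    have hw0 : ∀ m, w m = 0 := hinj w hgw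
    have h0 := hw0 i0
    have h1 := hw0 i1
    rw [hw] at h0 h1
    simp [if_neg hi0j, if_neg hi1j, if_neg hi1i0, if_neg (Ne.symm hi1i0)] at h0 h1
    -- h0 : c1 * Q j k = 0 ; h1 : c0 * Q j k = 0
    by_contra hQne
    have hc1z : c1 = 0 := by
      rcases h0 with h | h
      · exact h
      · exact absurd h hQne
    have hc0z : c0 = 0 := by
      rcases h1 with h | h
      · exact h
      · exact absurd h hQne
    set v : Fin n → ℝ := fun m =>
      Q j k * (if m = i0 then 1 else 0) - Q i0 k * (if m = j then 1 else 0) with hv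
    have hgv : ∀ l, ∑ m, g l m * v m = 0 := by
      intro l
      have hev : ∑ m, g l m * v m = Q j k * g l i0 - Q i0 k * g l j := by
        rw [hv]
        simp [mul_sub, mul_ite, mul_one, mul_zero, Finset.sum_sub_distrib,
          Finset.sum_ite_eq', Finset.mul_sum]
        ring
      rw [hev]
      by_cases hlk : l = k
      · rw [hlk]
        have hz : g k i0 * Q j k - g k j * Q i0 k = 0 := by rw [← hc0]; exact hc0z
        linarith [hz]
      · have hz := ha i0 l hi0k hlk
        linarith [hz]
    have := hinj v hgv i0
    rw [hv] at this
    simp [if_neg hi0j] at this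
    exact hQne this
  -- R is symmetric
  have hsymR : ∀ i j, R i j = R j i := by
    intro i j
    by_cases hij : i = j
    · rw [hij]
    · obtain ⟨k, hk⟩ := fresh {i, j} (by
        have := Finset.card_insert_le i ({j} : Finset (Fin n))
        simp at this ⊢
        omega)
      simp only [Finset.mem_insert, Finset.mem_singleton, not_or] at hk
      obtain ⟨hki, hkj⟩ := hk
      have h := E i j k k
      simp only [eq_self_iff_true, if_true, if_neg (Ne.symm hki), if_neg (Ne.symm hkj),
        one_mul, zero_mul] at h
      rw [hQ0 k j (Ne.symm hkj), hQ0 k i (Ne.symm hki)] at h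
      rw [hρ, hρ, hP, hP, hgsym j i] at h
      have h2 : (1/((n:ℝ)+1)) * (R j i - R i j) = (1/(n:ℝ)) * (R j i - R i j) := by
        linear_combination h
      have h3 : ((1:ℝ)/((n:ℝ)+1) - 1/(n:ℝ)) * (R j i - R i j) = 0 := by
        linear_combination h2
      rcases mul_eq_zero.1 h3 with h4 | h4
      · exfalso
        have hlt : (1:ℝ)/((n:ℝ)+1) < 1/(n:ℝ) := by
          apply one_div_lt_one_div_of_lt <;> linarith
        linarith
      · linarith
  -- main pointwise relation
  have hmain : ∀ k j l, j ≠ k →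
      R j l = (r/2 - ((n:ℝ)-1)*((n:ℝ)-2) * Q k k) * g j l := by
    intro k j l hjk
    by_cases hlk : l = k
    · rw [hlk]
      have h := E k j k k
      simp only [eq_self_iff_true, if_true, if_neg hjk, one_mul, zero_mul] at h
      rw [hQ0 k j hjk] at h
      rw [hρ, hρ, hP, hP] at h
      rw [← hsymR j k, hgsym k j] at h
      field_simp at h
      have hC : (2*((n:ℝ)-2)*((n:ℝ)-1)) ≠ 0 := by
        intro hz
        rcases mul_eq_zero.1 hz with hz | hz
        · rcases mul_eq_zero.1 hz with hz | hz
          · norm_num at hz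
          · exact hn2 hz
        · exact hn1 hz
      have h2 : R j k * (2*((n:ℝ)-2)*((n:ℝ)-1))
          = ((r/2 - ((n:ℝ)-1)*((n:ℝ)-2) * Q k k) * g j k) * (2*((n:ℝ)-2)*((n:ℝ)-1)) := by
        apply mul_left_cancel₀ (mul_ne_zero hn0 hnp1)
        linear_combination (-((n:ℝ)-2)*((n:ℝ)-1)) * h
      exact mul_right_cancel₀ hC h2
    · have h := E k j k l
      simp only [eq_self_iff_true, if_true, if_neg hjk, if_neg hlk, one_mul, zero_mul,
        zero_add, sub_zero, add_zero, zero_sub] at h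
      rw [hQ0 k j hjk] at h
      rw [hρ, hP] at h
      rw [← hsymR j l, hgsym l j] at h
      field_simp at h
      have hC : (2*((n:ℝ)-2)*((n:ℝ)-1)) ≠ 0 := by
        intro hz
        rcases mul_eq_zero.1 hz with hz | hz
        · rcases mul_eq_zero.1 hz with hz | hz
          · norm_num at hz
          · exact hn2 hz
        · exact hn1 hz
      have h2 : R j l * (2*((n:ℝ)-2)*((n:ℝ)-1))
          = ((r/2 - ((n:ℝ)-1)*((n:ℝ)-2) * Q k k) * g j l) * (2*((n:ℝ)-2)*((n:ℝ)-1)) := by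
        apply mul_left_cancel₀ (mul_ne_zero hn0 hnp1)
        linear_combination (-((n:ℝ)-2)*((n:ℝ)-1)) * h
      exact mul_right_cancel₀ hC h2
  -- every row of g is nonzero
  have hrow : ∀ j, ∃ l, g j l ≠ 0 := by
    intro j
    by_contra hz
    push_neg at hz
    have h1 := hinv j j
    simp only [if_pos rfl] at h1
    rw [Finset.sum_eq_zero (fun l _ => by rw [hgsym l j, hz l, mul_zero])] at h1
    norm_num at h1
  set μ : Fin n → ℝ := fun k => r/2 - ((n:ℝ)-1)*((n:ℝ)-2) * Q k k with hμdef
  have hconst : ∀ k1 k2, μ k1 = μ k2 := by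
    intro k1 k2
    by_cases h12 : k1 = k2
    · rw [h12]
    · obtain ⟨j, hj⟩ := fresh {k1, k2} (by
        have := Finset.card_insert_le k1 ({k2} : Finset (Fin n))
        simp at this ⊢
        omega)
      simp only [Finset.mem_insert, Finset.mem_singleton, not_or] at hj
      obtain ⟨hj1, hj2⟩ := hj
      obtain ⟨l, hl⟩ := hrow j
      have e1 := hmain k1 j l hj1
      have e2 := hmain k2 j l hj2
      rw [e1] at e2
      exact mul_right_cancel₀ hl e2
  have k0 : Fin n := ⟨0, by omega⟩
  have hglob : ∀ a b, R a b = μ k0 * g a b := by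
    intro a b
    obtain ⟨k, hk⟩ := fresh {a} (by simp; omega)
    simp only [Finset.mem_singleton] at hk
    have := hmain k a b (fun h => hk h.symm)
    rw [this]
    have hk' : (r / 2 - ((n:ℝ) - 1) * ((n:ℝ) - 2) * Q k k) = μ k := rfl
    rw [hk', hconst k k0]
  have htr : r = (n:ℝ) * μ k0 := by
    have hsum : ∑ i, ∑ j, ginv i j * R i j = ∑ _i : Fin n, μ k0 := by
      refine Finset.sum_congr rfl fun i _ => ?_
      calc ∑ j, ginv i j * R i j = ∑ j, μ k0 * (ginv i j * g j i) := by
            refine Finset.sum_congr rfl fun j _ => ?_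
            rw [hglob i j, hgsym i j]; ring
        _ = μ k0 * ∑ j, ginv i j * g j i := by rw [Finset.mul_sum]
        _ = μ k0 := by rw [hinv i i]; simp
    rw [hr, hsum]
    simp [Finset.sum_const, Finset.card_univ, mul_comm]
  intro i j
  rw [hglob i j]
  have : μ k0 = r/(n:ℝ) := by
    rw [eq_div_iff hn0]
    linarith [htr]
  rw [this]
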